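/- Let D: Corr(C,E) → Cat_∞ be a two-functor formalism on a geometric set-up (C,E), and let f: X → Y be a morphism in E. Then: (1) if f satisfies (Pr-I) stably, then f satisfies (Pr-II); (2) if f satisfies (Pr-II) stably, then f satisfies (Pr-I); (3) if f satisfies (Ét-I) stably, then f satisfies (Ét-II); (4) if f satisfies (Ét-II) stably, then f satisfies (Ét-I). -/

import Mathlib

open CategoryTheory CategoryTheory.Limits

universe w₂ w₁ v u

namespace SixFunctor

variable {C : Type u} [Category.{v} C]

/-- A commuting square of categories (with commutativity witness `sq : t ⋙ r ≅ l ⋙ b`)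
is *vertically right adjointable* if the vertical functors `l`, `r` admit right adjoints
and the associated mate transformation is an isomorphism. -/
def VertRightAdj {A B A' B' : Cat.{w₁, w₂}} (t : A ⥤ B) (l : A ⥤ A') (r : B ⥤ B')
    (b : A' ⥤ B') (sq : t ⋙ r ≅ l ⋙ b) : Prop :=
  ∃ (lR : A' ⥤ A) (rR : B' ⥤ B) (adj₁ : l ⊣ lR) (adj₂ : r ⊣ rR),
    IsIso (mateEquiv adj₁ adj₂ sq.hom)

/-- Vertically left adjointable squares. -/
def VertLeftAdj {A B A' B' : Cat.{w₁, w₂}} (t : A ⥤ B) (l : A ⥤ A') (r : B ⥤ B')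
    (b : A' ⥤ B') (sq : t ⋙ r ≅ l ⋙ b) : Prop :=
  ∃ (lL : A' ⥤ A) (rL : B' ⥤ B) (adj₁ : lL ⊣ l) (adj₂ : rL ⊣ r),
    IsIso ((mateEquiv adj₁ adj₂).symm sq.inv)

/-- The pullback/inverse image part of a formalism: a (pseudo)functor `Cᵒᵖ → Cat`. -/
structure PreBC (C : Type u) [Category.{v} C] where
  D : C → Cat.{w₁, w₂}
  pull : ∀ {X Y : C}, (X ⟶ Y) → ((D Y : Type w₂) ⥤ (D X : Type w₂))
  pullId : ∀ X : C, pull (𝟙 X) ≅ 𝟭 (D X)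
  pullComp : ∀ {X Y Z : C} (f : X ⟶ Y) (g : Y ⟶ Z), pull (f ≫ g) ≅ pull g ⋙ pull f

/-- A two-functor formalism on a geometric set-up `(C, E)`: inverse images `f^*` for all
morphisms, exceptional direct images `f_!` for morphisms in `E`, together with the
(co)herence isomorphisms and base change isomorphisms encoded by a functor
`Corr(C,E) → Cat`. -/
structure TwoFF (C : Type u) [Category.{v} C] (E : MorphismProperty C) extends
    PreBC.{w₂, w₁} C where
  push : ∀ {X Y : C} (f : X ⟶ Y), E f → ((D X : Type w₂) ⥤ (D Y : Type w₂))
  pushId : ∀ (X : C) (h : E (𝟙 X)), push (𝟙 X) h ≅ 𝟭 (D X)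
  pushComp : ∀ {X Y Z : C} (f : X ⟶ Y) (g : Y ⟶ Z) (hf : E f) (hg : E g) (hfg : E (f ≫ g)),
    push (f ≫ g) hfg ≅ push f hf ⋙ push g hg
  baseChange : ∀ {W X Y' Y : C} {gbar : W ⟶ X} {fbar : W ⟶ Y'} {f : X ⟶ Y} {g : Y' ⟶ Y},
    IsPullback gbar fbar f g → ∀ (hf : E f) (hfbar : E fbar),
      push f hf ⋙ pull g ≅ pull gbar ⋙ push fbar hfbar

variable [HasPullbacks C]

/-- `n`-truncatedness (shifted by 2): `IsTrunc 0 f` means `f` is `(-2)`-truncated,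
i.e. an isomorphism, and `IsTrunc (n+1) f` means the diagonal of `f` is `IsTrunc n`. -/
def IsTrunc : ℕ → ∀ {X Y : C}, (X ⟶ Y) → Prop
  | 0, _, _, f => IsIso f
  | n + 1, _, _, f => IsTrunc n (pullback.diagonal f)

variable {E : MorphismProperty C} [E.IsStableUnderBaseChange]

/-- Membership of the second projection. -/
theorem snd_mem {X Y : C} (f : X ⟶ Y) (hf : E f) : E (pullback.snd f f) :=
  MorphismProperty.of_isPullback (IsPullback.of_hasPullback f f) hf

/-- Condition (Pr-I) of Definition 2.4, for a morphism whose truncatedness level is `n`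
(where level `0` corresponds to `(-2)`-truncated). -/
def PrI (F : TwoFF.{w₂, w₁} C E)
    (hd : ∀ ⦃X Y : C⦄ (f : X ⟶ Y), E f → E (pullback.diagonal f)) :
    ℕ → ∀ ⦃X Y : C⦄ (f : X ⟶ Y), E f → Prop
  | 0 => fun _ _ f hf => IsIso f ∧ ∃ L, Nonempty (L ⊣ F.push f hf)
  | n + 1 => fun _ _ f hf =>
      PrI F hd n (pullback.diagonal f) (hd f hf) ∧
      VertLeftAdj (F.pull (pullback.fst f f)) (F.push f hf)
        (F.push (pullback.snd f f) (snd_mem f hf)) (F.pull f)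
        ((F.baseChange (IsPullback.of_hasPullback f f) hf (snd_mem f hf)).symm)

/-- Condition (Pr-II) of Definition 2.4. -/
def PrII (F : TwoFF.{w₂, w₁} C E)
    (hd : ∀ ⦃X Y : C⦄ (f : X ⟶ Y), E f → E (pullback.diagonal f)) :
    ℕ → ∀ ⦃X Y : C⦄ (f : X ⟶ Y), E f → Prop
  | 0 => fun _ _ f hf => IsIso f ∧ ∃ R, Nonempty (F.pull f ⊣ R)
  | n + 1 => fun _ _ f hf =>
      PrII F hd n (pullback.diagonal f) (hd f hf) ∧
      VertRightAdj (F.push f hf) (F.pull (pullback.fst f f)) (F.pull f)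
        (F.push (pullback.snd f f) (snd_mem f hf))
        (F.baseChange (IsPullback.of_hasPullback f f) hf (snd_mem f hf))

/-- Condition (Ét-I) of Definition 2.4. -/
def EtI (F : TwoFF.{w₂, w₁} C E)
    (hd : ∀ ⦃X Y : C⦄ (f : X ⟶ Y), E f → E (pullback.diagonal f)) :
    ℕ → ∀ ⦃X Y : C⦄ (f : X ⟶ Y), E f → Prop
  | 0 => fun _ _ f hf => IsIso f ∧ ∃ R, Nonempty (F.push f hf ⊣ R)
  | n + 1 => fun _ _ f hf =>
      EtI F hd n (pullback.diagonal f) (hd f hf) ∧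
      VertRightAdj (F.pull (pullback.fst f f)) (F.push f hf)
        (F.push (pullback.snd f f) (snd_mem f hf)) (F.pull f)
        ((F.baseChange (IsPullback.of_hasPullback f f) hf (snd_mem f hf)).symm)

/-- Condition (Ét-II) of Definition 2.4. -/
def EtII (F : TwoFF.{w₂, w₁} C E)
    (hd : ∀ ⦃X Y : C⦄ (f : X ⟶ Y), E f → E (pullback.diagonal f)) :
    ℕ → ∀ ⦃X Y : C⦄ (f : X ⟶ Y), E f → Prop
  | 0 => fun _ _ f hf => IsIso f ∧ ∃ L, Nonempty (L ⊣ F.pull f)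
  | n + 1 => fun _ _ f hf =>
      EtII F hd n (pullback.diagonal f) (hd f hf) ∧
      VertLeftAdj (F.push f hf) (F.pull (pullback.fst f f)) (F.pull f)
        (F.push (pullback.snd f f) (snd_mem f hf))
        (F.baseChange (IsPullback.of_hasPullback f f) hf (snd_mem f hf))

/-- A condition holds *stably* if it holds for every base change of `f`, and, inductively,
the same is true for the diagonal of `f`. -/
def StablyAt (P : ℕ → ∀ ⦃X Y : C⦄ (f : X ⟶ Y), E f → Prop)
    (hd : ∀ ⦃X Y : C⦄ (f : X ⟶ Y), E f → E (pullback.diagonal f)) :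
    ℕ → ∀ ⦃X Y : C⦄ (f : X ⟶ Y), E f → Prop
  | 0 => fun _ Y f _ =>
      ∀ ⦃W Y' : C⦄ (gbar : W ⟶ _) (fbar : W ⟶ Y') (g : Y' ⟶ Y),
        IsPullback gbar fbar f g → ∀ hfbar : E fbar, P 0 fbar hfbar
  | n + 1 => fun _ Y f hf =>
      (∀ ⦃W Y' : C⦄ (gbar : W ⟶ _) (fbar : W ⟶ Y') (g : Y' ⟶ Y),
        IsPullback gbar fbar f g → ∀ hfbar : E fbar, P (n + 1) fbar hfbar) ∧
      StablyAt P hd n (pullback.diagonal f) (hd f hf)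

end SixFunctor

namespace SixFunctor

/-! ### Auxiliary material for the proof -/

section MateTransfer

open Adjunction

variable {A₀ : Type*} [Category A₀]

/-- If `L ⊣ R` and `R ≅ 𝟭`, then `L ≅ 𝟭`. -/
noncomputable def leftAdjointIdIso {L R : A₀ ⥤ A₀} (adj : L ⊣ R) (e : R ≅ 𝟭 A₀) : L ≅ 𝟭 A₀ :=
  (adj.ofNatIsoRight e).leftAdjointUniq Adjunction.id

/-- If `L ⊣ R` and `L ≅ 𝟭`, then `R ≅ 𝟭`. -/
noncomputable def rightAdjointIdIso {L R : A₀ ⥤ A₀} (adj : L ⊣ R) (e : L ≅ 𝟭 A₀) : R ≅ 𝟭 A₀ :=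
  (adj.ofNatIsoLeft e).rightAdjointUniq Adjunction.id

variable {A B A' B' : Type*} [Category A] [Category B] [Category A'] [Category B']
  {G : A ⥤ A'} {H : B ⥤ B'}

/-- Invertibility of the mate does not depend on the choice of the adjunctions
(here for adjunctions with fixed left adjoints). -/
theorem isIso_mateEquiv_transfer {L₁ : A ⥤ B} {R₁ R₁' : B ⥤ A} {L₂ : A' ⥤ B'}
    {R₂ R₂' : B' ⥤ A'}
    (adj₁ : L₁ ⊣ R₁) (adj₁' : L₁ ⊣ R₁') (adj₂ : L₂ ⊣ R₂) (adj₂' : L₂ ⊣ R₂')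
    (α : G ⋙ L₂ ⟶ L₁ ⋙ H) (h : IsIso (mateEquiv adj₁ adj₂ α)) :
    IsIso (mateEquiv adj₁' adj₂' α) := by
  haveI := h
  have e1 : mateEquiv adj₁ adj₂' α
      = mateEquiv adj₁ adj₂ α ≫ Functor.whiskerLeft H (conjugateEquiv adj₂ adj₂' (𝟙 L₂)) := by
    have h2 := mateEquiv_conjugateEquiv_vcomp adj₁ adj₂ adj₂' α (𝟙 L₂)
    simp only [TwoSquare.whiskerRight, TwoSquare.whiskerBottom, Functor.whiskerLeft_id', Category.id_comp] at h2
    exact h2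
  have e2 : mateEquiv adj₁ adj₂' α
      = Functor.whiskerRight (conjugateEquiv adj₁ adj₁' (𝟙 L₁)) G ≫ mateEquiv adj₁' adj₂' α := by
    have h2 := conjugateEquiv_mateEquiv_vcomp adj₁ adj₁' adj₂' (𝟙 L₁) α
    simp only [TwoSquare.whiskerLeft, TwoSquare.whiskerTop,
      Functor.whiskerRight_id', Category.comp_id] at h2
    exact h2
  have e3 : mateEquiv adj₁' adj₂' α
      = inv (Functor.whiskerRight (conjugateEquiv adj₁ adj₁' (𝟙 L₁)) G) ≫
        mateEquiv adj₁ adj₂ α ≫ Functor.whiskerLeft H (conjugateEquiv adj₂ adj₂' (𝟙 L₂)) := by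
    rw [← e1, e2]
    exact (IsIso.inv_hom_id_assoc _ _).symm
  rw [e3]
  exact IsIso.comp_isIso' inferInstance (IsIso.comp_isIso' this inferInstance)

/-- Invertibility of the inverse mate does not depend on the choice of the adjunctions
(here for adjunctions with fixed right adjoints). -/
theorem isIso_mateEquiv_symm_transfer {L₁ L₁' : A ⥤ B} {R₁ : B ⥤ A} {L₂ L₂' : A' ⥤ B'}
    {R₂ : B' ⥤ A'}
    (adj₁ : L₁ ⊣ R₁) (adj₁' : L₁' ⊣ R₁) (adj₂ : L₂ ⊣ R₂) (adj₂' : L₂' ⊣ R₂)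
    (α : R₁ ⋙ G ⟶ H ⋙ R₂) (h : IsIso ((mateEquiv adj₁ adj₂).symm α)) :
    IsIso ((mateEquiv adj₁' adj₂').symm α) := by
  haveI := h
  have e1 : (mateEquiv adj₁ adj₂').symm α
      = Functor.whiskerLeft G ((conjugateEquiv adj₂ adj₂').symm (𝟙 R₂)) ≫
        (mateEquiv adj₁ adj₂).symm α := by
    erw [Equiv.symm_apply_eq]
    have h2 := mateEquiv_conjugateEquiv_vcomp adj₁ adj₂ adj₂' ((mateEquiv adj₁ adj₂).symm α)
      ((conjugateEquiv adj₂ adj₂').symm (𝟙 R₂))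
    simp only [TwoSquare.whiskerRight, TwoSquare.whiskerBottom,
      Equiv.apply_symm_apply, Functor.whiskerLeft_id', Category.comp_id] at h2
    exact (Equiv.apply_symm_apply _ _).symm.trans h2.symm
  have e2 : (mateEquiv adj₁ adj₂').symm α
      = (mateEquiv adj₁' adj₂').symm α ≫
        Functor.whiskerRight ((conjugateEquiv adj₁ adj₁').symm (𝟙 R₁)) H := by
    erw [Equiv.symm_apply_eq]
    have h2 := conjugateEquiv_mateEquiv_vcomp adj₁ adj₁' adj₂'
      ((conjugateEquiv adj₁ adj₁').symm (𝟙 R₁)) ((mateEquiv adj₁' adj₂').symm α)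
    simp only [TwoSquare.whiskerLeft, TwoSquare.whiskerTop,
      Equiv.apply_symm_apply, Functor.whiskerRight_id', Category.id_comp] at h2
    exact (Equiv.apply_symm_apply _ _).symm.trans h2.symm
  have e3 : (mateEquiv adj₁' adj₂').symm α
      = (Functor.whiskerLeft G ((conjugateEquiv adj₂ adj₂').symm (𝟙 R₂)) ≫
          (mateEquiv adj₁ adj₂).symm α) ≫
        inv (Functor.whiskerRight ((conjugateEquiv adj₁ adj₁').symm (𝟙 R₁)) H) := by
    rw [← e1, e2]
    exact ((IsIso.comp_inv_eq _).mpr rfl).symm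
  rw [e3]
  exact IsIso.comp_isIso' (IsIso.comp_isIso' inferInstance this) inferInstance


end MateTransfer

section PullbackHelpers

variable {C : Type u} [Category.{v} C] [HasPullbacks C]

/-- The diagonal of a base change is a base change of the diagonal. -/
theorem isPullback_diagonal_of_isPullback {X Y W Y' : C} {f : X ⟶ Y} {g : Y' ⟶ Y}
    {gbar : W ⟶ X} {fbar : W ⟶ Y'} (sq : IsPullback gbar fbar f g) :
    ∃ q : (pullback fbar fbar : C) ⟶ pullback f f,
      IsPullback gbar (pullback.diagonal fbar) (pullback.diagonal f) q := by
  have w : (pullback.fst fbar fbar ≫ gbar) ≫ f = (pullback.snd fbar fbar ≫ gbar) ≫ f := by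
    simp only [Category.assoc, sq.w, pullback.condition_assoc]
  refine ⟨pullback.lift _ _ w, ?_⟩
  have qfst : pullback.lift _ _ w ≫ pullback.fst f f = pullback.fst fbar fbar ≫ gbar :=
    pullback.lift_fst _ _ _
  have qsnd : pullback.lift _ _ w ≫ pullback.snd f f = pullback.snd fbar fbar ≫ gbar :=
    pullback.lift_snd _ _ _
  have comm : gbar ≫ pullback.diagonal f = pullback.diagonal fbar ≫ pullback.lift _ _ w := by
    apply pullback.hom_ext <;> simp [qfst, qsnd]
  have k1 : ∀ s : PullbackCone (pullback.diagonal f) (pullback.lift _ _ w),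
      (s.snd ≫ pullback.fst fbar fbar) ≫ gbar = s.fst := by
    intro s
    have hc := congrArg (fun t => t ≫ pullback.fst f f) s.condition
    simp only [Category.assoc, qfst, pullback.diagonal_fst, Category.comp_id] at hc
    simpa using hc.symm
  have k2 : ∀ s : PullbackCone (pullback.diagonal f) (pullback.lift _ _ w),
      (s.snd ≫ pullback.snd fbar fbar) ≫ gbar = s.fst := by
    intro s
    have hc := congrArg (fun t => t ≫ pullback.snd f f) s.condition
    simp only [Category.assoc, qsnd, pullback.diagonal_snd, Category.comp_id] at hc
    simpa using hc.symm
  have k3 : ∀ s : PullbackCone (pullback.diagonal f) (pullback.lift _ _ w),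
      s.snd ≫ pullback.fst fbar fbar = s.snd ≫ pullback.snd fbar fbar := by
    intro s
    apply sq.hom_ext
    · rw [Category.assoc, Category.assoc]
      rw [← Category.assoc, k1 s, ← Category.assoc, k2 s]
    · rw [Category.assoc, Category.assoc, pullback.condition]
  exact IsPullback.of_isLimit
    (PullbackCone.IsLimit.mk comm (fun s => s.snd ≫ pullback.fst fbar fbar)
      (fun s => k1 s)
      (fun s => by
        apply pullback.hom_ext
        · simp
        · simpa using k3 s)
      (fun s m hm1 hm2 => by
        have : m ≫ pullback.diagonal fbar ≫ pullback.fst fbar fbar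
            = s.snd ≫ pullback.fst fbar fbar := by
          rw [← Category.assoc, hm2]
        simpa using this))

variable {E : MorphismProperty C} [E.IsStableUnderBaseChange]

/-- `StablyAt` conditions are themselves stable under base change. -/
theorem stablyAt_of_isPullback
    (P : ℕ → ∀ ⦃X Y : C⦄ (f : X ⟶ Y), E f → Prop)
    (hd : ∀ ⦃X Y : C⦄ (f : X ⟶ Y), E f → E (pullback.diagonal f)) :
    ∀ (n : ℕ) {X Y W Y' : C} {f : X ⟶ Y} {g : Y' ⟶ Y} {gbar : W ⟶ X} {fbar : W ⟶ Y'},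
      IsPullback gbar fbar f g → ∀ (hf : E f) (hfbar : E fbar),
      StablyAt P hd n f hf → StablyAt P hd n fbar hfbar := by
  intro n
  induction n with
  | zero =>
    intro X Y W Y' f g gbar fbar sq hf hfbar h
    intro W' Y'' a b c sq' hb
    exact h (a ≫ gbar) b (c ≫ g) (sq'.paste_horiz sq) hb
  | succ n ihn =>
    intro X Y W Y' f g gbar fbar sq hf hfbar h
    refine ⟨?_, ?_⟩
    · intro W' Y'' a b c sq' hb
      exact h.1 (a ≫ gbar) b (c ≫ g) (sq'.paste_horiz sq) hb
    · obtain ⟨q, sqd⟩ := isPullback_diagonal_of_isPullback sq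
      exact ihn sqd (hd f hf) (hd fbar hfbar) h.2

end PullbackHelpers

section FormalismHelpers

variable {C : Type u} [Category.{v} C] [HasPullbacks C]
variable {E : MorphismProperty C} [E.IsStableUnderBaseChange] [E.IsMultiplicative]
variable (F : TwoFF.{w₂, w₁} C E)

/-- Congruence isomorphism for pullback functors. -/
noncomputable def pullCongr {X Y : C} {u v : X ⟶ Y} (h : u = v) : F.pull u ≅ F.pull v :=
  eqToIso (by rw [h])

/-- Congruence isomorphism for pushforward functors. -/
noncomputable def pushCongr {X Y : C} {u v : X ⟶ Y} (h : u = v) (hu : E u) (hv : E v) :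
    F.push u hu ≅ F.push v hv :=
  eqToIso (by subst h; exact congrArg (F.push u) (Subsingleton.elim hu hv))

/-- If `a ≫ b = 𝟙` then `b^* ∘ a^* ≅ 𝟭` (reading composition of functors left to right). -/
noncomputable def pullCompIdIso {X Y : C} (a : X ⟶ Y) (b : Y ⟶ X) (h : a ≫ b = 𝟙 X) :
    F.pull b ⋙ F.pull a ≅ 𝟭 (F.D X) :=
  (F.pullComp a b).symm ≪≫ pullCongr F h ≪≫ F.pullId X

/-- If `a ≫ b = 𝟙` then `a_! ∘ b_! ≅ 𝟭`. -/
noncomputable def pushCompIdIso {X Y : C} (a : X ⟶ Y) (b : Y ⟶ X) (h : a ≫ b = 𝟙 X)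
    (ha : E a) (hb : E b) :
    F.push a ha ⋙ F.push b hb ≅ 𝟭 (F.D X) :=
  (F.pushComp a b ha hb (by rw [h]; exact E.id_mem X)).symm ≪≫
    pushCongr F h _ (E.id_mem X) ≪≫ F.pushId X (E.id_mem X)

/-- For an isomorphism `f` in `E`, both adjunctions `f^* ⊣ f_!` and `f_! ⊣ f^*` hold. -/
theorem base_adjs {X Y : C} (f : X ⟶ Y) (hf : E f) (hiso : IsIso f) :
    Nonempty (F.pull f ⊣ F.push f hf) ∧ Nonempty (F.push f hf ⊣ F.pull f) := by
  haveI := hiso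
  let η : 𝟭 (F.D Y) ≅ F.pull f ⋙ F.pull (inv f) :=
    (F.pullId Y).symm ≪≫ pullCongr F (IsIso.inv_hom_id f).symm ≪≫ F.pullComp (inv f) f
  let ε : F.pull (inv f) ⋙ F.pull f ≅ 𝟭 (F.D X) :=
    pullCompIdIso F f (inv f) (IsIso.hom_inv_id f)
  let e : (F.D Y : Type w₂) ≌ (F.D X : Type w₂) :=
    CategoryTheory.Equivalence.mk (F.pull f) (F.pull (inv f)) η ε
  have hpp : F.push f hf ⋙ F.pull f ≅ 𝟭 (F.D X) :=
    F.baseChange (IsKernelPair.id_of_mono f) hf (E.id_mem X) ≪≫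
      Functor.isoWhiskerRight (F.pullId X) (F.push (𝟙 X) (E.id_mem X)) ≪≫
      Functor.leftUnitor _ ≪≫ F.pushId X (E.id_mem X)
  have hpush : F.push f hf ≅ F.pull (inv f) :=
    (Functor.rightUnitor _).symm ≪≫ Functor.isoWhiskerLeft (F.push f hf) η ≪≫
      Functor.isoWhiskerRight hpp (F.pull (inv f)) ≪≫ Functor.leftUnitor _
  have adj1 : F.pull f ⊣ F.pull (inv f) := e.toAdjunction
  have adj2 : F.pull (inv f) ⊣ F.pull f := e.symm.toAdjunction
  exact ⟨⟨adj1.ofNatIsoRight hpush.symm⟩, ⟨adj2.ofNatIsoLeft hpush.symm⟩⟩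

/-- From (Pr-I) at level `n+1` and the adjunction `δ^* ⊣ δ_!` for the diagonal,
construct the adjunction `f^* ⊣ f_!`. -/
theorem adj_of_prI (hd : ∀ ⦃X Y : C⦄ (f : X ⟶ Y), E f → E (pullback.diagonal f))
    {n : ℕ} {X Y : C} (f : X ⟶ Y) (hf : E f)
    (h : PrI F hd (n + 1) f hf)
    (adjd : Nonempty (F.pull (pullback.diagonal f) ⊣ F.push (pullback.diagonal f) (hd f hf))) :
    Nonempty (F.pull f ⊣ F.push f hf) := by
  obtain ⟨adjd⟩ := adjd
  obtain ⟨-, fn, p2n, adj1, adj2, hm⟩ := h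
  haveI := hm
  let μ := asIso ((mateEquiv adj1 adj2).symm
    ((F.baseChange (IsPullback.of_hasPullback f f) hf (snd_mem f hf)).symm).inv)
  -- μ : F.pull f ⋙ p2n ≅ fn ⋙ F.pull (pullback.fst f f)
  have isoC : F.pull (pullback.fst f f) ⋙ F.pull (pullback.diagonal f) ≅ 𝟭 (F.D X) :=
    pullCompIdIso F (pullback.diagonal f) (pullback.fst f f) (pullback.diagonal_fst f)
  have isoA : F.push (pullback.diagonal f) (hd f hf) ⋙ F.push (pullback.snd f f) (snd_mem f hf)
      ≅ 𝟭 (F.D X) :=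
    pushCompIdIso F (pullback.diagonal f) (pullback.snd f f) (pullback.diagonal_snd f) _ _
  have isoQ : p2n ⋙ F.pull (pullback.diagonal f) ≅ 𝟭 (F.D X) :=
    leftAdjointIdIso (adj2.comp adjd) isoA
  have isoF : fn ≅ F.pull f :=
    (Functor.rightUnitor fn).symm ≪≫ Functor.isoWhiskerLeft fn isoC.symm ≪≫
      Functor.isoWhiskerRight μ.symm (F.pull (pullback.diagonal f)) ≪≫
      Functor.isoWhiskerLeft (F.pull f) isoQ ≪≫ Functor.rightUnitor (F.pull f)
  exact ⟨adj1.ofNatIsoLeft isoF⟩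

/-- From (Pr-II) at level `n+1` and the adjunction `δ^* ⊣ δ_!` for the diagonal,
construct the adjunction `f^* ⊣ f_!`. -/
theorem adj_of_prII (hd : ∀ ⦃X Y : C⦄ (f : X ⟶ Y), E f → E (pullback.diagonal f))
    {n : ℕ} {X Y : C} (f : X ⟶ Y) (hf : E f)
    (h : PrII F hd (n + 1) f hf)
    (adjd : Nonempty (F.pull (pullback.diagonal f) ⊣ F.push (pullback.diagonal f) (hd f hf))) :
    Nonempty (F.pull f ⊣ F.push f hf) := by
  obtain ⟨adjd⟩ := adjd
  obtain ⟨-, lR, rR, adj1, adj2, hm⟩ := h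
  haveI := hm
  let ν := asIso (mateEquiv adj1 adj2
    (F.baseChange (IsPullback.of_hasPullback f f) hf (snd_mem f hf)).hom)
  -- ν : lR ⋙ F.push f hf ≅ F.push (pullback.snd f f) _ ⋙ rR
  have isoC : F.pull (pullback.fst f f) ⋙ F.pull (pullback.diagonal f) ≅ 𝟭 (F.D X) :=
    pullCompIdIso F (pullback.diagonal f) (pullback.fst f f) (pullback.diagonal_fst f)
  have isoA : F.push (pullback.diagonal f) (hd f hf) ⋙ F.push (pullback.snd f f) (snd_mem f hf)
      ≅ 𝟭 (F.D X) :=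
    pushCompIdIso F (pullback.diagonal f) (pullback.snd f f) (pullback.diagonal_snd f) _ _
  have isoLR : F.push (pullback.diagonal f) (hd f hf) ⋙ lR ≅ 𝟭 (F.D X) :=
    rightAdjointIdIso (adj1.comp adjd) isoC
  have isoR : rR ≅ F.push f hf :=
    (Functor.leftUnitor rR).symm ≪≫ Functor.isoWhiskerRight isoA.symm rR ≪≫
      Functor.isoWhiskerLeft (F.push (pullback.diagonal f) (hd f hf)) ν.symm ≪≫
      Functor.isoWhiskerRight isoLR (F.push f hf) ≪≫ Functor.leftUnitor _
  exact ⟨adj2.ofNatIsoRight isoR⟩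

/-- From (Ét-I) at level `n+1` and the adjunction `δ_! ⊣ δ^*` for the diagonal,
construct the adjunction `f_! ⊣ f^*`. -/
theorem adj_of_etI (hd : ∀ ⦃X Y : C⦄ (f : X ⟶ Y), E f → E (pullback.diagonal f))
    {n : ℕ} {X Y : C} (f : X ⟶ Y) (hf : E f)
    (h : EtI F hd (n + 1) f hf)
    (adjd : Nonempty (F.push (pullback.diagonal f) (hd f hf) ⊣ F.pull (pullback.diagonal f))) :
    Nonempty (F.push f hf ⊣ F.pull f) := by
  obtain ⟨adjd⟩ := adjd
  obtain ⟨-, lR, rR, adj1, adj2, hm⟩ := h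
  haveI := hm
  let ν := asIso (mateEquiv adj1 adj2
    ((F.baseChange (IsPullback.of_hasPullback f f) hf (snd_mem f hf)).symm).hom)
  -- ν : lR ⋙ F.pull (pullback.fst f f) ≅ F.pull f ⋙ rR
  have isoC : F.pull (pullback.fst f f) ⋙ F.pull (pullback.diagonal f) ≅ 𝟭 (F.D X) :=
    pullCompIdIso F (pullback.diagonal f) (pullback.fst f f) (pullback.diagonal_fst f)
  have isoA : F.push (pullback.diagonal f) (hd f hf) ⋙ F.push (pullback.snd f f) (snd_mem f hf)
      ≅ 𝟭 (F.D X) :=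
    pushCompIdIso F (pullback.diagonal f) (pullback.snd f f) (pullback.diagonal_snd f) _ _
  have isoRd : rR ⋙ F.pull (pullback.diagonal f) ≅ 𝟭 (F.D X) :=
    rightAdjointIdIso (adjd.comp adj2) isoA
  have isoL : lR ≅ F.pull f :=
    (Functor.rightUnitor lR).symm ≪≫ Functor.isoWhiskerLeft lR isoC.symm ≪≫
      Functor.isoWhiskerRight ν (F.pull (pullback.diagonal f)) ≪≫
      Functor.isoWhiskerLeft (F.pull f) isoRd ≪≫ Functor.rightUnitor _
  exact ⟨adj1.ofNatIsoRight isoL⟩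

/-- From (Ét-II) at level `n+1` and the adjunction `δ_! ⊣ δ^*` for the diagonal,
construct the adjunction `f_! ⊣ f^*`. -/
theorem adj_of_etII (hd : ∀ ⦃X Y : C⦄ (f : X ⟶ Y), E f → E (pullback.diagonal f))
    {n : ℕ} {X Y : C} (f : X ⟶ Y) (hf : E f)
    (h : EtII F hd (n + 1) f hf)
    (adjd : Nonempty (F.push (pullback.diagonal f) (hd f hf) ⊣ F.pull (pullback.diagonal f))) :
    Nonempty (F.push f hf ⊣ F.pull f) := by
  obtain ⟨adjd⟩ := adjd
  obtain ⟨-, lL, rL, adj1, adj2, hm⟩ := h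
  haveI := hm
  let μ := asIso ((mateEquiv adj1 adj2).symm
    (F.baseChange (IsPullback.of_hasPullback f f) hf (snd_mem f hf)).inv)
  -- μ : F.push (pullback.snd f f) _ ⋙ rL ≅ lL ⋙ F.push f hf
  have isoC : F.pull (pullback.fst f f) ⋙ F.pull (pullback.diagonal f) ≅ 𝟭 (F.D X) :=
    pullCompIdIso F (pullback.diagonal f) (pullback.fst f f) (pullback.diagonal_fst f)
  have isoA : F.push (pullback.diagonal f) (hd f hf) ⋙ F.push (pullback.snd f f) (snd_mem f hf)
      ≅ 𝟭 (F.D X) :=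
    pushCompIdIso F (pullback.diagonal f) (pullback.snd f f) (pullback.diagonal_snd f) _ _
  have isoLd : F.push (pullback.diagonal f) (hd f hf) ⋙ lL ≅ 𝟭 (F.D X) :=
    leftAdjointIdIso (adjd.comp adj1) isoC
  have isoR : rL ≅ F.push f hf :=
    (Functor.leftUnitor rL).symm ≪≫ Functor.isoWhiskerRight isoA.symm rL ≪≫
      Functor.isoWhiskerLeft (F.push (pullback.diagonal f) (hd f hf)) μ ≪≫
      Functor.isoWhiskerRight isoLd (F.push f hf) ≪≫ Functor.leftUnitor _
  exact ⟨adj2.ofNatIsoLeft isoR⟩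

end FormalismHelpers

/-- The master induction: each stable condition implies its partner, together with the
corresponding canonical adjunction between `f^*` and `f_!`. -/
theorem master {C : Type u} [Category.{v} C] [HasPullbacks C]
    {E : MorphismProperty C} [E.IsStableUnderBaseChange] [E.IsMultiplicative]
    (F : TwoFF.{w₂, w₁} C E)
    (hd : ∀ ⦃X Y : C⦄ (f : X ⟶ Y), E f → E (pullback.diagonal f)) :
    ∀ (n : ℕ) {X Y : C} (f : X ⟶ Y) (hf : E f),
    (StablyAt (PrI F hd) hd n f hf →
      PrII F hd n f hf ∧ Nonempty (F.pull f ⊣ F.push f hf)) ∧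
    (StablyAt (PrII F hd) hd n f hf →
      PrI F hd n f hf ∧ Nonempty (F.pull f ⊣ F.push f hf)) ∧
    (StablyAt (EtI F hd) hd n f hf →
      EtII F hd n f hf ∧ Nonempty (F.push f hf ⊣ F.pull f)) ∧
    (StablyAt (EtII F hd) hd n f hf →
      EtI F hd n f hf ∧ Nonempty (F.push f hf ⊣ F.pull f)) := by
  intro n
  induction n with
  | zero =>
    intro X Y f hf
    refine ⟨?_, ?_, ?_, ?_⟩
    · intro hS
      have hiso : IsIso f := (hS (𝟙 X) f (𝟙 Y) (IsPullback.id_horiz f) hf).1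
      obtain ⟨a1, a2⟩ := base_adjs F f hf hiso
      exact ⟨⟨hiso, F.push f hf, a1⟩, a1⟩
    · intro hS
      have hiso : IsIso f := (hS (𝟙 X) f (𝟙 Y) (IsPullback.id_horiz f) hf).1
      obtain ⟨a1, a2⟩ := base_adjs F f hf hiso
      exact ⟨⟨hiso, F.pull f, a1⟩, a1⟩
    · intro hS
      have hiso : IsIso f := (hS (𝟙 X) f (𝟙 Y) (IsPullback.id_horiz f) hf).1
      obtain ⟨a1, a2⟩ := base_adjs F f hf hiso
      exact ⟨⟨hiso, F.push f hf, a2⟩, a2⟩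
    · intro hS
      have hiso : IsIso f := (hS (𝟙 X) f (𝟙 Y) (IsPullback.id_horiz f) hf).1
      obtain ⟨a1, a2⟩ := base_adjs F f hf hiso
      exact ⟨⟨hiso, F.pull f, a2⟩, a2⟩
  | succ n ih =>
    intro X Y f hf
    have sqf : IsPullback (pullback.fst f f) (pullback.snd f f) f f :=
      IsPullback.of_hasPullback f f
    have sqf' : IsPullback (pullback.snd f f) (pullback.fst f f) f f := sqf.flip
    have hp2 : E (pullback.snd f f) := snd_mem f hf
    have hp1 : E (pullback.fst f f) := MorphismProperty.of_isPullback sqf' hf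
    obtain ⟨q2, sqd2⟩ := isPullback_diagonal_of_isPullback sqf
    obtain ⟨q1, sqd1⟩ := isPullback_diagonal_of_isPullback sqf'
    refine ⟨?_, ?_, ?_, ?_⟩
    -- Case 1: (Pr-I) stably implies (Pr-II)
    · intro hS
      have hSd := hS.2
      have hd_res := (ih (pullback.diagonal f) (hd f hf)).1 hSd
      have hPrI_f : PrI F hd (n + 1) f hf := hS.1 (𝟙 X) f (𝟙 Y) (IsPullback.id_horiz f) hf
      have hPrI_p1 : PrI F hd (n + 1) (pullback.fst f f) hp1 :=
        hS.1 (pullback.snd f f) (pullback.fst f f) f sqf' hp1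
      have hPrI_p2 : PrI F hd (n + 1) (pullback.snd f f) hp2 :=
        hS.1 (pullback.fst f f) (pullback.snd f f) f sqf hp2
      have hSd1 := stablyAt_of_isPullback (PrI F hd) hd n sqd1 (hd f hf) (hd _ hp1) hSd
      have hSd2 := stablyAt_of_isPullback (PrI F hd) hd n sqd2 (hd f hf) (hd _ hp2) hSd
      have adjd1 := ((ih (pullback.diagonal (pullback.fst f f)) (hd _ hp1)).1 hSd1).2
      have adjd2 := ((ih (pullback.diagonal (pullback.snd f f)) (hd _ hp2)).1 hSd2).2
      obtain ⟨adjF⟩ := adj_of_prI F hd f hf hPrI_f hd_res.2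
      obtain ⟨adjP1⟩ := adj_of_prI F hd (pullback.fst f f) hp1 hPrI_p1 adjd1
      obtain ⟨adjP2⟩ := adj_of_prI F hd (pullback.snd f f) hp2 hPrI_p2 adjd2
      refine ⟨⟨hd_res.1, ?_⟩, ⟨adjF⟩⟩
      refine ⟨F.push (pullback.fst f f) hp1, F.push f hf, adjP1, adjF, ?_⟩
      obtain ⟨lL, rL, adj1, adj2, hm⟩ := hPrI_f.2
      have hA : IsIso ((mateEquiv adjF adjP2).symm
          (F.baseChange (IsPullback.of_hasPullback f f) hf (snd_mem f hf)).hom) :=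
        isIso_mateEquiv_symm_transfer adj1 adjF adj2 adjP2 _ hm
      haveI := hA
      have hB := iterated_mateEquiv_conjugateEquiv adjF adjP2 adjF adjP1
        ((mateEquiv adjF adjP2).symm
          (F.baseChange (IsPullback.of_hasPullback f f) hf (snd_mem f hf)).hom)
      replace hB := (congrArg (mateEquiv adjP1 adjF)
        (Equiv.apply_symm_apply (mateEquiv adjF adjP2) _)).symm.trans hB
      rw [hB]
      exact @conjugateEquiv_iso _ _ _ _ _ _ _ _ (adjF.comp adjP1) (adjF.comp adjP2) _ hA
    -- Case 2: (Pr-II) stably implies (Pr-I)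
    · intro hS
      have hSd := hS.2
      have hd_res := (ih (pullback.diagonal f) (hd f hf)).2.1 hSd
      have hPrII_f : PrII F hd (n + 1) f hf := hS.1 (𝟙 X) f (𝟙 Y) (IsPullback.id_horiz f) hf
      have hPrII_p1 : PrII F hd (n + 1) (pullback.fst f f) hp1 :=
        hS.1 (pullback.snd f f) (pullback.fst f f) f sqf' hp1
      have hPrII_p2 : PrII F hd (n + 1) (pullback.snd f f) hp2 :=
        hS.1 (pullback.fst f f) (pullback.snd f f) f sqf hp2
      have hSd1 := stablyAt_of_isPullback (PrII F hd) hd n sqd1 (hd f hf) (hd _ hp1) hSd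
      have hSd2 := stablyAt_of_isPullback (PrII F hd) hd n sqd2 (hd f hf) (hd _ hp2) hSd
      have adjd1 := ((ih (pullback.diagonal (pullback.fst f f)) (hd _ hp1)).2.1 hSd1).2
      have adjd2 := ((ih (pullback.diagonal (pullback.snd f f)) (hd _ hp2)).2.1 hSd2).2
      obtain ⟨adjF⟩ := adj_of_prII F hd f hf hPrII_f hd_res.2
      obtain ⟨adjP1⟩ := adj_of_prII F hd (pullback.fst f f) hp1 hPrII_p1 adjd1
      obtain ⟨adjP2⟩ := adj_of_prII F hd (pullback.snd f f) hp2 hPrII_p2 adjd2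
      refine ⟨⟨hd_res.1, ?_⟩, ⟨adjF⟩⟩
      refine ⟨F.pull f, F.pull (pullback.snd f f), adjF, adjP2, ?_⟩
      obtain ⟨lR, rR, adj1, adj2, hm⟩ := hPrII_f.2
      have hA : IsIso (mateEquiv adjP1 adjF
          (F.baseChange (IsPullback.of_hasPullback f f) hf (snd_mem f hf)).hom) :=
        isIso_mateEquiv_transfer adj1 adjP1 adj2 adjF _ hm
      have hB := iterated_mateEquiv_conjugateEquiv adjF adjP2 adjF adjP1
        ((mateEquiv adjF adjP2).symm
          (F.baseChange (IsPullback.of_hasPullback f f) hf (snd_mem f hf)).hom)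
      replace hB := (congrArg (mateEquiv adjP1 adjF)
        (Equiv.apply_symm_apply (mateEquiv adjF adjP2) _)).symm.trans hB
      rw [hB] at hA
      haveI := hA
      show IsIso ((mateEquiv adjF adjP2).symm
        (F.baseChange (IsPullback.of_hasPullback f f) hf (snd_mem f hf)).hom)
      exact conjugateEquiv_of_iso (adjF.comp adjP1) (adjF.comp adjP2) _
    -- Case 3: (Ét-I) stably implies (Ét-II)
    · intro hS
      have hSd := hS.2
      have hd_res := (ih (pullback.diagonal f) (hd f hf)).2.2.1 hSd
      have hEtI_f : EtI F hd (n + 1) f hf := hS.1 (𝟙 X) f (𝟙 Y) (IsPullback.id_horiz f) hf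
      have hEtI_p1 : EtI F hd (n + 1) (pullback.fst f f) hp1 :=
        hS.1 (pullback.snd f f) (pullback.fst f f) f sqf' hp1
      have hEtI_p2 : EtI F hd (n + 1) (pullback.snd f f) hp2 :=
        hS.1 (pullback.fst f f) (pullback.snd f f) f sqf hp2
      have hSd1 := stablyAt_of_isPullback (EtI F hd) hd n sqd1 (hd f hf) (hd _ hp1) hSd
      have hSd2 := stablyAt_of_isPullback (EtI F hd) hd n sqd2 (hd f hf) (hd _ hp2) hSd
      have adjd1 := ((ih (pullback.diagonal (pullback.fst f f)) (hd _ hp1)).2.2.1 hSd1).2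
      have adjd2 := ((ih (pullback.diagonal (pullback.snd f f)) (hd _ hp2)).2.2.1 hSd2).2
      obtain ⟨adjF⟩ := adj_of_etI F hd f hf hEtI_f hd_res.2
      obtain ⟨adjP1⟩ := adj_of_etI F hd (pullback.fst f f) hp1 hEtI_p1 adjd1
      obtain ⟨adjP2⟩ := adj_of_etI F hd (pullback.snd f f) hp2 hEtI_p2 adjd2
      refine ⟨⟨hd_res.1, ?_⟩, ⟨adjF⟩⟩
      refine ⟨F.push (pullback.fst f f) hp1, F.push f hf, adjP1, adjF, ?_⟩
      obtain ⟨lR, rR, adj1, adj2, hm⟩ := hEtI_f.2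
      have hA : IsIso (mateEquiv adjF adjP2
          (F.baseChange (IsPullback.of_hasPullback f f) hf (snd_mem f hf)).inv) :=
        isIso_mateEquiv_transfer adj1 adjF adj2 adjP2 _ hm
      haveI := hA
      have hB := iterated_mateEquiv_conjugateEquiv_symm adjP1 adjF adjP2 adjF
        (mateEquiv adjF adjP2
          (F.baseChange (IsPullback.of_hasPullback f f) hf (snd_mem f hf)).inv)
      replace hB := (congrArg (mateEquiv adjP1 adjF).symm
        (Equiv.symm_apply_apply (mateEquiv adjF adjP2) _)).symm.trans hB
      rw [hB]
      exact @conjugateEquiv_symm_iso _ _ _ _ _ _ _ _ (adjP1.comp adjF) (adjP2.comp adjF) _ hA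
    -- Case 4: (Ét-II) stably implies (Ét-I)
    · intro hS
      have hSd := hS.2
      have hd_res := (ih (pullback.diagonal f) (hd f hf)).2.2.2 hSd
      have hEtII_f : EtII F hd (n + 1) f hf := hS.1 (𝟙 X) f (𝟙 Y) (IsPullback.id_horiz f) hf
      have hEtII_p1 : EtII F hd (n + 1) (pullback.fst f f) hp1 :=
        hS.1 (pullback.snd f f) (pullback.fst f f) f sqf' hp1
      have hEtII_p2 : EtII F hd (n + 1) (pullback.snd f f) hp2 :=
        hS.1 (pullback.fst f f) (pullback.snd f f) f sqf hp2
      have hSd1 := stablyAt_of_isPullback (EtII F hd) hd n sqd1 (hd f hf) (hd _ hp1) hSd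
      have hSd2 := stablyAt_of_isPullback (EtII F hd) hd n sqd2 (hd f hf) (hd _ hp2) hSd
      have adjd1 := ((ih (pullback.diagonal (pullback.fst f f)) (hd _ hp1)).2.2.2 hSd1).2
      have adjd2 := ((ih (pullback.diagonal (pullback.snd f f)) (hd _ hp2)).2.2.2 hSd2).2
      obtain ⟨adjF⟩ := adj_of_etII F hd f hf hEtII_f hd_res.2
      obtain ⟨adjP1⟩ := adj_of_etII F hd (pullback.fst f f) hp1 hEtII_p1 adjd1
      obtain ⟨adjP2⟩ := adj_of_etII F hd (pullback.snd f f) hp2 hEtII_p2 adjd2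
      refine ⟨⟨hd_res.1, ?_⟩, ⟨adjF⟩⟩
      refine ⟨F.pull f, F.pull (pullback.snd f f), adjF, adjP2, ?_⟩
      obtain ⟨lL, rL, adj1, adj2, hm⟩ := hEtII_f.2
      have hA : IsIso ((mateEquiv adjP1 adjF).symm
          (F.baseChange (IsPullback.of_hasPullback f f) hf (snd_mem f hf)).inv) :=
        isIso_mateEquiv_symm_transfer adj1 adjP1 adj2 adjF _ hm
      have hB := iterated_mateEquiv_conjugateEquiv_symm adjP1 adjF adjP2 adjF
        (mateEquiv adjF adjP2
          (F.baseChange (IsPullback.of_hasPullback f f) hf (snd_mem f hf)).inv)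
      replace hB := (congrArg (mateEquiv adjP1 adjF).symm
        (Equiv.symm_apply_apply (mateEquiv adjF adjP2) _)).symm.trans hB
      rw [hB] at hA
      haveI := hA
      show IsIso (mateEquiv adjF adjP2
        (F.baseChange (IsPullback.of_hasPullback f f) hf (snd_mem f hf)).inv)
      exact @conjugateEquiv_symm_of_iso _ _ _ _ _ _ _ _ (adjP1.comp adjF) (adjP2.comp adjF) _ hA



/-- Lemma 2.5. Let `D : Corr(C,E) → Cat_∞` be a two-functor formalism on a
geometric set-up `(C,E)` and `f : X ⟶ Y` a morphism in `E` (which is `n`-truncated, the level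
being recorded by the index `n` of the inductively defined conditions). Then:
(1) if `f` satisfies (Pr-I) stably, then `f` satisfies (Pr-II);
(2) if `f` satisfies (Pr-II) stably, then `f` satisfies (Pr-I);
(3) if `f` satisfies (Ét-I) stably, then `f` satisfies (Ét-II);
(4) if `f` satisfies (Ét-II) stably, then `f` satisfies (Ét-I). -/
theorem stably_PrI_implies_PrII {C : Type u} [Category.{v} C] [HasPullbacks C]
    {E : MorphismProperty C} [E.IsStableUnderBaseChange] [E.IsMultiplicative]
    (F : TwoFF.{w₂, w₁} C E)
    (hd : ∀ ⦃X Y : C⦄ (f : X ⟶ Y), E f → E (pullback.diagonal f))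
    (n : ℕ) {X Y : C} (f : X ⟶ Y) (hf : E f) :
    (StablyAt (PrI F hd) hd n f hf → PrII F hd n f hf) ∧
    (StablyAt (PrII F hd) hd n f hf → PrI F hd n f hf) ∧
    (StablyAt (EtI F hd) hd n f hf → EtII F hd n f hf) ∧
    (StablyAt (EtII F hd) hd n f hf → EtI F hd n f hf) := by
  obtain ⟨h1, h2, h3, h4⟩ := master F hd n f hf
  exact ⟨fun h => (h1 h).1, fun h => (h2 h).1, fun h => (h3 h).1, fun h => (h4 h).1⟩

end SixFunctor
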